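/- In the setting of the previous statement (finite irreducible generator A with invariant μ of full support, constants κ, λ, γ > 0, speed function v : S → ℝ, free energy functions F^A and F^{sym} defined via the Donsker–Varadhan rate functions I_e^A and I_e^{sym}), define the rate functions I^A(x) = sup_{α∈ℝ}(αx − F^A(α)) and I^{sym}(x) = sup_{α∈ℝ}(αx − F^{sym}(α)). Then I^{sym}(x) ≤ I^A(x) for every x ∈ ℝ: the large deviation rate function of the active particle is minimized by the reversible state process. -/

import Mathlib

open Matrix Finset Filter Topology


lemma aux_cosh {κ x : ℝ} (hκ : 0 < κ) (α : ℝ) :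
    α * x - 2 * κ * (Real.cosh α - 1) ≤ x^2 / κ := by
  have ht : (0:ℝ) ≤ |α| := abs_nonneg α
  have h1 : |α|/2 + 1 ≤ Real.exp (|α|/2) := Real.add_one_le_exp _
  have h2 : -|α| + 1 ≤ Real.exp (-|α|) := Real.add_one_le_exp _
  have h3 : Real.exp (|α|/2) * Real.exp (|α|/2) = Real.exp |α| := by
    rw [← Real.exp_add]; ring_nf
  have h4 : (1+|α|/2)*(1+|α|/2) ≤ Real.exp |α| := by nlinarith [Real.exp_pos (|α|/2)]
  have h5 : Real.cosh α = (Real.exp |α| + Real.exp (-|α|))/2 := by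
    rw [← Real.cosh_abs, Real.cosh_eq]
  have h6 : α * x ≤ |α| * |x| := (le_abs_self _).trans (le_of_eq (abs_mul _ _))
  have h7 : |x|^2 = x^2 := sq_abs x
  have h8 : |α|^2/4 ≤ Real.cosh α * 2 - 2 := by nlinarith
  have h9 : κ^2 * (|α|^2/4) ≤ κ^2 * (Real.cosh α * 2 - 2) :=
    mul_le_mul_of_nonneg_left h8 (sq_nonneg κ)
  have h10 : κ * (α*x) ≤ κ * (|α| * |x|) := mul_le_mul_of_nonneg_left h6 hκ.le
  have key : κ * (α * x - 2 * κ * (Real.cosh α - 1)) ≤ x^2 := by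
    nlinarith [sq_nonneg (κ * |α| / 2 - |x|)]
  rw [le_div_iff₀ hκ]
  linarith [key, mul_comm κ (α * x - 2 * κ * (Real.cosh α - 1))]


lemma aux_dirichlet {n : ℕ} (A : Matrix (Fin n) (Fin n) ℝ) (μ u : Fin n → ℝ)
    (hA_off : ∀ i j, i ≠ j → 0 ≤ A i j)
    (hA_row : ∀ i, ∑ j, A i j = 0)
    (hμ_pos : ∀ i, 0 ≤ μ i)
    (hμ_inv : ∀ j, ∑ i, μ i * A i j = 0) :
    0 ≤ ∑ i, μ i * u i * (-(A *ᵥ u) i) := by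
  have e1 : ∑ i, ∑ j, μ i * A i j * u i ^ 2 = 0 := by
    refine Finset.sum_eq_zero fun i _ => ?_
    have : ∑ j, μ i * A i j * u i ^ 2 = (μ i * u i ^ 2) * ∑ j, A i j := by
      rw [Finset.mul_sum]; exact Finset.sum_congr rfl fun j _ => by ring
    rw [this, hA_row, mul_zero]
  have e2 : ∑ i, ∑ j, μ i * A i j * u j ^ 2 = 0 := by
    rw [Finset.sum_comm]
    refine Finset.sum_eq_zero fun j _ => ?_
    rw [← Finset.sum_mul, hμ_inv, zero_mul]
  have e3 : ∑ i, μ i * u i * (-(A *ᵥ u) i)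
      = -∑ i, ∑ j, μ i * A i j * (u i * u j) := by
    rw [← Finset.sum_neg_distrib]
    refine Finset.sum_congr rfl fun i _ => ?_
    simp only [Matrix.mulVec, dotProduct]
    rw [mul_neg, neg_inj, Finset.mul_sum]
    exact Finset.sum_congr rfl fun j _ => by ring
  have key : ∑ i, ∑ j, μ i * A i j * (u i - u j) ^ 2
      = 2 * ∑ i, μ i * u i * (-(A *ᵥ u) i) := by
    have lhs_eq : ∑ i, ∑ j, μ i * A i j * (u i - u j) ^ 2
        = (∑ i, ∑ j, μ i * A i j * u i ^ 2) + (∑ i, ∑ j, μ i * A i j * u j ^ 2)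
          - 2 * ∑ i, ∑ j, μ i * A i j * (u i * u j) := by
      simp only [Finset.mul_sum, ← Finset.sum_add_distrib, ← Finset.sum_sub_distrib]
      exact Finset.sum_congr rfl fun i _ => Finset.sum_congr rfl fun j _ => by ring
    rw [lhs_eq, e1, e2, e3]; ring
  have pos : 0 ≤ ∑ i, ∑ j, μ i * A i j * (u i - u j) ^ 2 := by
    refine Finset.sum_nonneg fun i _ => Finset.sum_nonneg fun j _ => ?_
    rcases eq_or_ne i j with rfl | hij
    · simp
    · exact mul_nonneg (mul_nonneg (hμ_pos i) (hA_off i j hij)) (sq_nonneg _)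
  linarith [key ▸ pos]


lemma aux_DV_le {n : ℕ} (A : Matrix (Fin n) (Fin n) ℝ) (ξ : Fin n → ℝ)
    (hA_off : ∀ i j, i ≠ j → 0 ≤ A i j)
    (hξ0 : ∀ i, 0 ≤ ξ i) :
    ∀ x ∈ {x : ℝ | ∃ u : Fin n → ℝ, (∀ i, 0 < u i) ∧
      x = -∑ i, ξ i * (A *ᵥ u) i / u i}, x ≤ ∑ i, ξ i * (-A i i) := by
  rintro x ⟨u, hu, rfl⟩
  rw [← Finset.sum_neg_distrib]
  refine Finset.sum_le_sum fun i _ => ?_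
  have hrow : (A *ᵥ u) i = A i i * u i + ∑ j ∈ Finset.univ.erase i, A i j * u j := by
    simp only [Matrix.mulVec, dotProduct]
    exact (Finset.add_sum_erase _ (fun j => A i j * u j) (Finset.mem_univ i)).symm
  have hrest : 0 ≤ ∑ j ∈ Finset.univ.erase i, A i j * u j :=
    Finset.sum_nonneg fun j hj =>
      mul_nonneg (hA_off i j (Finset.ne_of_mem_erase hj).symm) (hu j).le
  rw [neg_le, le_div_iff₀ (hu i), hrow]
  nlinarith [mul_nonneg (hξ0 i) hrest]


lemma aux_sym_le_sSup {n : ℕ} (A : Matrix (Fin n) (Fin n) ℝ) (μ ξ : Fin n → ℝ)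
    (hA_row : ∀ i, ∑ j, A i j = 0)
    (hμ_pos : ∀ i, 0 < μ i)
    (hξ0 : ∀ i, 0 ≤ ξ i)
    (hBdd : BddAbove {x : ℝ | ∃ u : Fin n → ℝ, (∀ i, 0 < u i) ∧
      x = -∑ i, ξ i * (A *ᵥ u) i / u i}) :
    ∑ i, μ i * Real.sqrt (ξ i / μ i) * (-(A *ᵥ fun j => Real.sqrt (ξ j / μ j)) i)
      ≤ sSup {x : ℝ | ∃ u : Fin n → ℝ, (∀ i, 0 < u i) ∧
        x = -∑ i, ξ i * (A *ᵥ u) i / u i} := by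
  set u : Fin n → ℝ := fun j => Real.sqrt (ξ j / μ j) with hu_def
  set c : Fin n → ℝ := A *ᵥ u with hc_def
  have hu_nonneg : ∀ i, 0 ≤ u i := fun i => Real.sqrt_nonneg _
  -- rewrite the LHS
  have hL : ∑ i, μ i * u i * (-(c i)) = -∑ i, ξ i * c i / u i := by
    rw [← Finset.sum_neg_distrib]
    refine Finset.sum_congr rfl fun i _ => ?_
    rcases eq_or_lt_of_le (hξ0 i) with h0 | hpos
    · have hui : u i = 0 := by
        simp [hu_def, ← h0]
      rw [hui, ← h0]; simp
    · have hdiv : 0 < ξ i / μ i := div_pos hpos (hμ_pos i)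
      have hui : 0 < u i := Real.sqrt_pos.2 hdiv
      have hsq : u i ^ 2 = ξ i / μ i := Real.sq_sqrt hdiv.le
      have hxi : ξ i = μ i * u i ^ 2 := by
        rw [hsq, mul_div_cancel₀ _ (hμ_pos i).ne']
      rw [hxi]
      field_simp
  -- membership of the approximants
  have hmem : ∀ ε : ℝ, 0 < ε → (-∑ i, ξ i * c i / (u i + ε)) ∈
      {x : ℝ | ∃ u : Fin n → ℝ, (∀ i, 0 < u i) ∧
        x = -∑ i, ξ i * (A *ᵥ u) i / u i} := by
    intro ε hε
    refine ⟨fun i => u i + ε, fun i => by positivity, ?_⟩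
    congr 1
    refine Finset.sum_congr rfl fun i _ => ?_
    have : (A *ᵥ fun j => u j + ε) i = c i := by
      simp only [hc_def, Matrix.mulVec, dotProduct, mul_add]
      rw [Finset.sum_add_distrib, ← Finset.sum_mul, hA_row, zero_mul, add_zero]
    rw [this]
  -- the limit
  have htends : Tendsto (fun ε : ℝ => -∑ i, ξ i * c i / (u i + ε)) (𝓝[>] 0)
      (𝓝 (-∑ i, ξ i * c i / u i)) := by
    refine Tendsto.neg ?_
    refine tendsto_finset_sum _ fun i _ => ?_
    rcases eq_or_lt_of_le (hξ0 i) with h0 | hpos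
    · simp only [← h0, zero_mul, zero_div]
      exact tendsto_const_nhds
    · have hui : 0 < u i := Real.sqrt_pos.2 (div_pos hpos (hμ_pos i))
      have h1 : Tendsto (fun ε : ℝ => u i + ε) (𝓝 0) (𝓝 (u i)) := by
        simpa using (tendsto_const_nhds (x := u i) (f := 𝓝 (0:ℝ))).add tendsto_id
      have h2 : Tendsto (fun ε : ℝ => ξ i * c i / (u i + ε)) (𝓝 0)
          (𝓝 (ξ i * c i / u i)) := by
        have := (tendsto_const_nhds (x := ξ i * c i) (f := 𝓝 (0:ℝ))).div h1 hui.ne'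
        exact this
      exact h2.mono_left nhdsWithin_le_nhds
  rw [hL]
  refine le_of_tendsto htends ?_
  filter_upwards [self_mem_nhdsWithin] with ε hε
  exact le_csSup hBdd (hmem ε hε)





open Matrix Finset

/-- The large deviation rate function of the active particle (the Legendre
transform of the free energy) is minimized pointwise by the reversible state process:
`I^{sym}(x) ≤ I^A(x)` for all `x ∈ ℝ`. -/
theorem rate_function_reversible_min
    {n : ℕ} (hn : 0 < n)
    (A : Matrix (Fin n) (Fin n) ℝ) (μ : Fin n → ℝ)
    (κ lam γ : ℝ) (hκ : 0 < κ) (hlam : 0 < lam) (hγ : 0 < γ)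
    (v : Fin n → ℝ)
    -- A is a Markov generator
    (hA_off : ∀ i j, i ≠ j → 0 ≤ A i j)
    (hA_row : ∀ i, ∑ j, A i j = 0)
    -- μ is a probability measure with full support, invariant for A
    (hμ_pos : ∀ i, 0 < μ i)
    (hμ_sum : ∑ i, μ i = 1)
    (hμ_inv : ∀ j, ∑ i, μ i * A i j = 0)
    -- irreducibility/ergodicity: the kernel of A consists of the constant functions
    (h_erg : ∀ f : Fin n → ℝ, A *ᵥ f = 0 → ∃ c : ℝ, ∀ i, f i = c)
    -- the Donsker–Varadhan rate function of A
    (IeA : (Fin n → ℝ) → ℝ)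
    (hIeA : ∀ ξ, IeA ξ = sSup {x : ℝ | ∃ u : Fin n → ℝ, (∀ i, 0 < u i) ∧
      x = -∑ i, ξ i * (A *ᵥ u) i / u i})
    -- the Donsker–Varadhan rate function of sym(A): ⟨u, -Au⟩_μ with u_i = √(ξ_i/μ_i)
    (IeSym : (Fin n → ℝ) → ℝ)
    (hIeSym : ∀ ξ, IeSym ξ = ∑ i, μ i * Real.sqrt (ξ i / μ i) *
      (-(A *ᵥ fun j => Real.sqrt (ξ j / μ j)) i))
    -- the moment generating function of v under ξ
    (φ : (Fin n → ℝ) → ℝ → ℝ)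
    (hφ : ∀ ξ α, φ ξ α = ∑ i, ξ i * Real.exp (α * v i))
    -- the two free energy functions
    (FA Fsym : ℝ → ℝ)
    (hFA : ∀ α, FA α = 2 * κ * (Real.cosh α - 1) +
      sSup {y : ℝ | ∃ ξ : Fin n → ℝ, (∀ i, 0 ≤ ξ i) ∧ (∑ i, ξ i = 1) ∧
        y = lam * (φ ξ α - 1) - γ * IeA ξ})
    (hFsym : ∀ α, Fsym α = 2 * κ * (Real.cosh α - 1) +
      sSup {y : ℝ | ∃ ξ : Fin n → ℝ, (∀ i, 0 ≤ ξ i) ∧ (∑ i, ξ i = 1) ∧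
        y = lam * (φ ξ α - 1) - γ * IeSym ξ})
    -- the rate functions: Legendre transforms of the free energies
    (IA Isym : ℝ → ℝ)
    (hIA : ∀ x, IA x = sSup {y : ℝ | ∃ α : ℝ, y = α * x - FA α})
    (hIsym : ∀ x, Isym x = sSup {y : ℝ | ∃ α : ℝ, y = α * x - Fsym α}) :
    ∀ x : ℝ, Isym x ≤ IA x := by
  haveI : Nonempty (Fin n) := Fin.pos_iff_nonempty.mp hn
  -- diagonal entries are nonpositive
  have hdiag : ∀ i, A i i ≤ 0 := by
    intro i
    have h := hA_row i
    rw [← Finset.add_sum_erase _ _ (Finset.mem_univ i)] at h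
    have h2 : 0 ≤ ∑ j ∈ Finset.univ.erase i, A i j :=
      Finset.sum_nonneg fun j hj => hA_off i j (Finset.ne_of_mem_erase hj).symm
    linarith
  set C : ℝ := Finset.univ.sup' Finset.univ_nonempty (fun i => -A i i) with hC_def
  have hC_le : ∀ i, -A i i ≤ C := fun i => by
    rw [hC_def]; exact Finset.le_sup' (fun i => -A i i) (Finset.mem_univ i)
  -- the DV sets
  set S : (Fin n → ℝ) → Set ℝ := fun ξ => {x : ℝ | ∃ u : Fin n → ℝ, (∀ i, 0 < u i) ∧
      x = -∑ i, ξ i * (A *ᵥ u) i / u i} with hS_def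
  have hS_zero : ∀ ξ : Fin n → ℝ, (0:ℝ) ∈ S ξ := by
    intro ξ
    refine ⟨fun _ => 1, fun _ => one_pos, ?_⟩
    simp [Matrix.mulVec, dotProduct, hA_row]
  have hS_bdd : ∀ ξ : Fin n → ℝ, (∀ i, 0 ≤ ξ i) → BddAbove (S ξ) := fun ξ hξ =>
    ⟨∑ i, ξ i * (-A i i), aux_DV_le A ξ hA_off hξ⟩
  have hIeA_nonneg : ∀ ξ : Fin n → ℝ, (∀ i, 0 ≤ ξ i) → 0 ≤ IeA ξ := by
    intro ξ hξ
    rw [hIeA ξ]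
    exact le_csSup (hS_bdd ξ hξ) (hS_zero ξ)
  have hIeA_le : ∀ ξ : Fin n → ℝ, (∀ i, 0 ≤ ξ i) → (∑ i, ξ i = 1) → IeA ξ ≤ C := by
    intro ξ hξ hξ1
    rw [hIeA ξ]
    refine csSup_le ⟨0, hS_zero ξ⟩ fun x hx => (aux_DV_le A ξ hA_off hξ x hx).trans ?_
    calc ∑ i, ξ i * (-A i i) ≤ ∑ i, ξ i * C :=
          Finset.sum_le_sum fun i _ => mul_le_mul_of_nonneg_left (hC_le i) (hξ i)
      _ = C := by rw [← Finset.sum_mul, hξ1, one_mul]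
  have hIeSym_nonneg : ∀ ξ : Fin n → ℝ, 0 ≤ IeSym ξ := by
    intro ξ
    rw [hIeSym ξ]
    exact aux_dirichlet A μ (fun j => Real.sqrt (ξ j / μ j)) hA_off hA_row
      (fun i => (hμ_pos i).le) hμ_inv
  have hIeSym_le : ∀ ξ : Fin n → ℝ, (∀ i, 0 ≤ ξ i) → IeSym ξ ≤ IeA ξ := by
    intro ξ hξ
    rw [hIeSym ξ, hIeA ξ]
    exact aux_sym_le_sSup A μ ξ hA_row hμ_pos hξ (hS_bdd ξ hξ)
  -- bounds on φ
  set M : ℝ → ℝ := fun α => Finset.univ.sup' Finset.univ_nonempty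
      (fun i => Real.exp (α * v i)) with hM_def
  have hφ_le : ∀ (ξ : Fin n → ℝ) (α : ℝ), (∀ i, 0 ≤ ξ i) → (∑ i, ξ i = 1) →
      φ ξ α ≤ M α := by
    intro ξ α hξ hξ1
    rw [hφ ξ α]
    calc ∑ i, ξ i * Real.exp (α * v i) ≤ ∑ i, ξ i * M α :=
          Finset.sum_le_sum fun i _ => mul_le_mul_of_nonneg_left
            (by rw [hM_def]
                exact Finset.le_sup' (fun i => Real.exp (α * v i)) (Finset.mem_univ i))
            (hξ i)
      _ = M α := by rw [← Finset.sum_mul, hξ1, one_mul]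
  have hφ_nonneg : ∀ (ξ : Fin n → ℝ) (α : ℝ), (∀ i, 0 ≤ ξ i) → 0 ≤ φ ξ α := by
    intro ξ α hξ
    rw [hφ ξ α]
    exact Finset.sum_nonneg fun i _ => mul_nonneg (hξ i) (Real.exp_pos _).le
  -- the inner sup sets
  have hAset_ne : ∀ α : ℝ, ∃ y, y ∈ {y : ℝ | ∃ ξ : Fin n → ℝ, (∀ i, 0 ≤ ξ i) ∧
      (∑ i, ξ i = 1) ∧ y = lam * (φ ξ α - 1) - γ * IeA ξ} :=
    fun α => ⟨_, μ, fun i => (hμ_pos i).le, hμ_sum, rfl⟩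
  have hsym_bdd : ∀ α : ℝ, BddAbove {y : ℝ | ∃ ξ : Fin n → ℝ, (∀ i, 0 ≤ ξ i) ∧
      (∑ i, ξ i = 1) ∧ y = lam * (φ ξ α - 1) - γ * IeSym ξ} := by
    intro α
    refine ⟨lam * (M α - 1), ?_⟩
    rintro y ⟨ξ, hξ, hξ1, rfl⟩
    have h1 : γ * IeSym ξ ≥ 0 := mul_nonneg hγ.le (hIeSym_nonneg ξ)
    have h2 : lam * (φ ξ α - 1) ≤ lam * (M α - 1) :=
      mul_le_mul_of_nonneg_left (by linarith [hφ_le ξ α hξ hξ1]) hlam.le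
    linarith
  have hA_inner_bdd : ∀ α : ℝ, BddAbove {y : ℝ | ∃ ξ : Fin n → ℝ, (∀ i, 0 ≤ ξ i) ∧
      (∑ i, ξ i = 1) ∧ y = lam * (φ ξ α - 1) - γ * IeA ξ} := by
    intro α
    refine ⟨lam * (M α - 1), ?_⟩
    rintro y ⟨ξ, hξ, hξ1, rfl⟩
    have h1 : γ * IeA ξ ≥ 0 := mul_nonneg hγ.le (hIeA_nonneg ξ hξ)
    have h2 : lam * (φ ξ α - 1) ≤ lam * (M α - 1) :=
      mul_le_mul_of_nonneg_left (by linarith [hφ_le ξ α hξ hξ1]) hlam.le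
    linarith
  -- FA ≤ Fsym
  have hFA_le_Fsym : ∀ α : ℝ, FA α ≤ Fsym α := by
    intro α
    rw [hFA α, hFsym α]
    refine add_le_add le_rfl ?_
    refine csSup_le (hAset_ne α) ?_
    rintro y ⟨ξ, hξ, hξ1, rfl⟩
    have h1 : lam * (φ ξ α - 1) - γ * IeA ξ ≤ lam * (φ ξ α - 1) - γ * IeSym ξ := by
      have := mul_le_mul_of_nonneg_left (hIeSym_le ξ hξ) hγ.le
      linarith
    exact h1.trans (le_csSup (hsym_bdd α) ⟨ξ, hξ, hξ1, rfl⟩)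
  -- lower bound on FA
  have hFA_lb : ∀ α : ℝ, 2 * κ * (Real.cosh α - 1) - lam - γ * C ≤ FA α := by
    intro α
    rw [hFA α]
    have hmem : lam * (φ μ α - 1) - γ * IeA μ ∈ {y : ℝ | ∃ ξ : Fin n → ℝ,
        (∀ i, 0 ≤ ξ i) ∧ (∑ i, ξ i = 1) ∧ y = lam * (φ ξ α - 1) - γ * IeA ξ} :=
      ⟨μ, fun i => (hμ_pos i).le, hμ_sum, rfl⟩
    have h1 : lam * (φ μ α - 1) ≥ -lam := by
      nlinarith [hφ_nonneg μ α (fun i => (hμ_pos i).le)]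
    have h2 : γ * IeA μ ≤ γ * C :=
      mul_le_mul_of_nonneg_left (hIeA_le μ (fun i => (hμ_pos i).le) hμ_sum) hγ.le
    have h3 : -lam - γ * C ≤ sSup {y : ℝ | ∃ ξ : Fin n → ℝ, (∀ i, 0 ≤ ξ i) ∧
        (∑ i, ξ i = 1) ∧ y = lam * (φ ξ α - 1) - γ * IeA ξ} :=
      le_trans (by linarith) (le_csSup (hA_inner_bdd α) hmem)
    linarith
  -- conclusion
  intro x
  rw [hIsym x, hIA x]
  have hbdd2 : BddAbove {y : ℝ | ∃ α : ℝ, y = α * x - FA α} := by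
    refine ⟨x ^ 2 / κ + lam + γ * C, ?_⟩
    rintro y ⟨α, rfl⟩
    have := aux_cosh hκ (x := x) α
    have := hFA_lb α
    linarith
  refine csSup_le ⟨0 * x - Fsym 0, 0, rfl⟩ ?_
  rintro y ⟨α, rfl⟩
  have h1 : α * x - FA α ≤ sSup {y : ℝ | ∃ α : ℝ, y = α * x - FA α} :=
    le_csSup hbdd2 ⟨α, rfl⟩
  linarith [hFA_le_Fsym α]
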